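/- Let b ∈ L¹(ℝ³) satisfy ∫ b = 0 and ‖|y−z| b(y)‖_{L¹} < ∞ for some z ∈ ℝ³, and let V have finite global Kato norm. Then ∫_{ℝ³} |x−z| |[V(−Δ)^{−1}b](x)| dx ≲ ‖V‖_𝒦 · ‖|y−z| b(y)‖_{L¹}, i.e., V(−Δ)^{−1} preserves the weighted space |y−z|^{−1}L¹ on mean-zero functions. -/

import Mathlib

open MeasureTheory Real

noncomputable abbrev E3 := EuclideanSpace ℝ (Fin 3)

/-- `(−Δ)^{−1}`, with kernel `1/(4π|x−y|)` on `ℝ³`. -/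
noncomputable def invLap (b : E3 → ℝ) (x : E3) : ℝ :=
  ∫ y, b y / (4 * π * ‖x - y‖)

open Metric Set ENNReal

lemma finite_ball : ∫⁻ x in ball (0:E3) 1, ENNReal.ofReal ‖x‖⁻¹ < ∞ := by
  have hmeas : AEMeasurable (fun x : E3 => ‖x‖⁻¹) (volume.restrict (ball 0 1)) :=
    measurable_norm.inv.aemeasurable
  rw [lintegral_eq_lintegral_meas_le _ (Filter.Eventually.of_forall fun x => by positivity) hmeas]
  set B := volume (ball (0:E3) 1) with hB
  have hBfin : B < ∞ := measure_ball_lt_top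
  calc ∫⁻ t in Ioi (0:ℝ), (volume.restrict (ball (0:E3) 1)) {a | t ≤ ‖a‖⁻¹}
      ≤ ∫⁻ t in Ioc (0:ℝ) 1 ∪ Ioi 1, (volume.restrict (ball (0:E3) 1)) {a | t ≤ ‖a‖⁻¹} :=
        lintegral_mono_set Ioi_subset_Ioc_union_Ioi
    _ ≤ (∫⁻ t in Ioc (0:ℝ) 1, (volume.restrict (ball (0:E3) 1)) {a | t ≤ ‖a‖⁻¹})
        + ∫⁻ t in Ioi (1:ℝ), (volume.restrict (ball (0:E3) 1)) {a | t ≤ ‖a‖⁻¹} :=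
        lintegral_union_le _ _ _
    _ < ∞ := by
        refine ENNReal.add_lt_top.2 ⟨?_, ?_⟩
        · calc ∫⁻ t in Ioc (0:ℝ) 1, (volume.restrict (ball (0:E3) 1)) {a | t ≤ ‖a‖⁻¹}
              ≤ ∫⁻ _ in Ioc (0:ℝ) 1, B := by
                refine lintegral_mono fun t => ?_
                exact (measure_mono (Set.subset_univ _)).trans_eq (Measure.restrict_apply_univ _)
          _ = B * volume (Ioc (0:ℝ) 1) := by rw [setLIntegral_const]
          _ < ∞ := by
                apply ENNReal.mul_lt_top hBfin
                simp [Real.volume_Ioc]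
        · have hbound : ∀ t ∈ Ioi (1:ℝ),
              (volume.restrict (ball (0:E3) 1)) {a | t ≤ ‖a‖⁻¹}
                ≤ ENNReal.ofReal (t ^ (-3:ℝ)) * B := by
            intro t ht
            have ht1 : (1:ℝ) < t := ht
            have ht0 : (0:ℝ) < t := lt_trans one_pos ht1
            have hsub : {a : E3 | t ≤ ‖a‖⁻¹} ⊆ closedBall 0 t⁻¹ := by
              intro a ha
              simp only [mem_setOf_eq] at ha
              rw [mem_closedBall_zero_iff]
              rcases eq_or_lt_of_le (norm_nonneg a) with h0 | h0
              · rw [← h0]; positivity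
              · have := (le_inv_comm₀ ht0 h0).1 ha
                exact this
            calc (volume.restrict (ball (0:E3) 1)) {a | t ≤ ‖a‖⁻¹}
                ≤ volume (closedBall (0:E3) t⁻¹) :=
                  (Measure.restrict_apply_le _ _).trans (measure_mono hsub)
              _ = ENNReal.ofReal (t ^ (-3:ℝ)) * B := by
                  rw [Measure.addHaar_closedBall _ _ (by positivity : (0:ℝ) ≤ t⁻¹)]
                  congr 2
                  have h3 : Module.finrank ℝ E3 = 3 := finrank_euclideanSpace_fin
                  rw [h3, Real.rpow_neg ht0.le,
                    show ((3:ℝ)) = ((3:ℕ):ℝ) by norm_num, Real.rpow_natCast, inv_pow]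
          calc ∫⁻ t in Ioi (1:ℝ), (volume.restrict (ball (0:E3) 1)) {a | t ≤ ‖a‖⁻¹}
              ≤ ∫⁻ t in Ioi (1:ℝ), ENNReal.ofReal (t ^ (-3:ℝ)) * B :=
                setLIntegral_mono_ae (by fun_prop) (ae_of_all _ hbound)
            _ = (∫⁻ t in Ioi (1:ℝ), ENNReal.ofReal (t ^ (-3:ℝ))) * B :=
                lintegral_mul_const' _ _ hBfin.ne
            _ < ∞ := by
                apply ENNReal.mul_lt_top _ hBfin
                exact (integrableOn_Ioi_rpow_of_lt (by norm_num) one_pos).lintegral_lt_top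

lemma ker_meas : Measurable (fun p : E3 × E3 => ENNReal.ofReal ‖p.1 - p.2‖⁻¹) :=
  ((measurable_fst.sub measurable_snd).norm.inv).ennreal_ofReal

lemma kernel_ball_bound (y : E3) (n : ℕ) :
    ∫⁻ x in ball (0:E3) n, ENNReal.ofReal ‖x - y‖⁻¹ ≤
      (∫⁻ u in ball (0:E3) 1, ENNReal.ofReal ‖u‖⁻¹) + volume (ball (0:E3) n) := by
  set φ : E3 → ℝ≥0∞ := (ball (0:E3) 1).indicator (fun u => ENNReal.ofReal ‖u‖⁻¹) with hφ
  have hφm : Measurable φ := (measurable_norm.inv.ennreal_ofReal).indicator measurableSet_ball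
  have hpt : ∀ x : E3, ENNReal.ofReal ‖x - y‖⁻¹ ≤ φ (x - y) + 1 := by
    intro x
    by_cases hx : x - y ∈ ball (0:E3) 1
    · rw [hφ, Set.indicator_of_mem hx]; exact le_self_add
    · rw [hφ, Set.indicator_of_notMem hx, zero_add]
      rw [mem_ball_zero_iff, not_lt] at hx
      exact ENNReal.ofReal_le_one.2 (inv_le_one_of_one_le₀ hx)
  calc ∫⁻ x in ball (0:E3) n, ENNReal.ofReal ‖x - y‖⁻¹
      ≤ ∫⁻ x in ball (0:E3) n, (φ (x - y) + 1) := lintegral_mono hpt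
    _ = (∫⁻ x in ball (0:E3) n, φ (x - y)) + ∫⁻ _ in ball (0:E3) n, (1:ℝ≥0∞) :=
        lintegral_add_right' _ aemeasurable_const
    _ ≤ (∫⁻ x : E3, φ (x - y)) + volume (ball (0:E3) n) := by
        gcongr
        · exact Measure.restrict_le_self
        · simp
    _ = (∫⁻ u in ball (0:E3) 1, ENNReal.ofReal ‖u‖⁻¹) + volume (ball (0:E3) n) := by
        rw [lintegral_sub_right_eq_self φ y, hφ, lintegral_indicator measurableSet_ball]

lemma ptwise (x y z : E3) (hyx : y ≠ x) (t : ℝ) :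
    ‖x - z‖ * |t / (4*π*‖x-y‖) - t / (4*π*‖x-z‖)| ≤
      (4*π)⁻¹ * ((‖y - z‖ * |t|) * ‖x - y‖⁻¹) := by
  set a := ‖x - y‖ with ha'
  set d := ‖x - z‖ with hd'
  set e := ‖y - z‖ with he'
  have ha : 0 < a := by
    rw [ha', norm_pos_iff, sub_ne_zero]; exact fun h => hyx h.symm
  have hd0 : 0 ≤ d := norm_nonneg _
  have he : |d - a| ≤ e := by
    have h := abs_norm_sub_norm_le (x - z) (x - y)
    have : (x - z) - (x - y) = y - z := by abel
    rwa [this] at h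
  have hgabs : |t / (4*π*a) - t / (4*π*d)| = |t| * (4*π)⁻¹ * |a⁻¹ - d⁻¹| := by
    have : t / (4*π*a) - t / (4*π*d) = t * (4*π)⁻¹ * (a⁻¹ - d⁻¹) := by
      rw [div_eq_mul_inv, div_eq_mul_inv, mul_inv, mul_inv]; ring
    rw [this, abs_mul, abs_mul, abs_of_nonneg (by positivity : (0:ℝ) ≤ (4*π)⁻¹)]
  have hkey : d * |a⁻¹ - d⁻¹| ≤ e * a⁻¹ := by
    rcases eq_or_lt_of_le hd0 with h0 | h0
    · rw [← h0, zero_mul]; positivity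
    · have hinv : a⁻¹ - d⁻¹ = (d - a) * (a*d)⁻¹ := by field_simp
      rw [hinv, abs_mul, abs_of_nonneg (by positivity : (0:ℝ) ≤ (a*d)⁻¹)]
      have : d * (|d - a| * (a*d)⁻¹) = |d - a| * a⁻¹ := by
        field_simp
      rw [this]
      exact mul_le_mul_of_nonneg_right he (by positivity)
  calc d * |t / (4*π*a) - t / (4*π*d)| = (|t| * (4*π)⁻¹) * (d * |a⁻¹ - d⁻¹|) := by
        rw [hgabs]; ring
    _ ≤ (|t| * (4*π)⁻¹) * (e * a⁻¹) := by
        exact mul_le_mul_of_nonneg_left hkey (by positivity)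
    _ = (4*π)⁻¹ * ((e * |t|) * a⁻¹) := by ring

lemma key_bound (b : E3 → ℝ) (hb : Integrable b) (hb0 : ∫ y, b y = 0) (z x : E3) :
    ENNReal.ofReal (‖x - z‖ * |invLap b x|) ≤
      ENNReal.ofReal ((4*π)⁻¹) *
        ∫⁻ y, ENNReal.ofReal (‖y - z‖ * |b y|) * ENNReal.ofReal ‖x - y‖⁻¹ := by
  by_cases hInt : Integrable (fun y => b y / (4 * π * ‖x - y‖))
  swap
  · rw [invLap, integral_undef hInt]
    simp
  have hInt2 : Integrable (fun y => b y / (4 * π * ‖x - z‖)) := hb.div_const _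
  have hI2 : ∫ y, b y / (4 * π * ‖x - z‖) = 0 := by
    rw [integral_div, hb0, zero_div]
  set g : E3 → ℝ := fun y => b y / (4 * π * ‖x - y‖) - b y / (4 * π * ‖x - z‖) with hg
  have hgInt : Integrable g := hInt.sub hInt2
  have hu : invLap b x = ∫ y, g y := by
    rw [invLap, ← sub_zero (∫ y, b y / (4 * π * ‖x - y‖)), ← hI2, ← integral_sub hInt hInt2]
  have h1 : |invLap b x| ≤ ∫ y, |g y| := by
    rw [hu]
    simpa [Real.norm_eq_abs] using norm_integral_le_integral_norm (μ := volume) g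
  have h2 : ENNReal.ofReal (∫ y, |g y|) ≤ ∫⁻ y, ENNReal.ofReal |g y| :=
    (ofReal_integral_eq_lintegral_ofReal hgInt.abs
      (Filter.Eventually.of_forall fun y => abs_nonneg _)).le
  have hae : ∀ᵐ y : E3, y ≠ x := by
    have h0 : (volume : Measure E3) {x} = 0 := measure_singleton x
    rw [ae_iff]
    simpa using h0
  calc ENNReal.ofReal (‖x - z‖ * |invLap b x|)
      = ENNReal.ofReal ‖x - z‖ * ENNReal.ofReal |invLap b x| :=
        ENNReal.ofReal_mul (norm_nonneg _)
    _ ≤ ENNReal.ofReal ‖x - z‖ * ∫⁻ y, ENNReal.ofReal |g y| :=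
        mul_le_mul_right ((ENNReal.ofReal_le_ofReal h1).trans h2) _
    _ = ∫⁻ y, ENNReal.ofReal ‖x - z‖ * ENNReal.ofReal |g y| :=
        (lintegral_const_mul' _ _ ENNReal.ofReal_ne_top).symm
    _ ≤ ∫⁻ y, ENNReal.ofReal ((4*π)⁻¹) *
          (ENNReal.ofReal (‖y - z‖ * |b y|) * ENNReal.ofReal ‖x - y‖⁻¹) := by
        refine lintegral_mono_ae (hae.mono fun y hy => ?_)
        calc ENNReal.ofReal ‖x - z‖ * ENNReal.ofReal |g y|
            = ENNReal.ofReal (‖x - z‖ * |g y|) := (ENNReal.ofReal_mul (norm_nonneg _)).symm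
          _ ≤ ENNReal.ofReal ((4*π)⁻¹ * ((‖y - z‖ * |b y|) * ‖x - y‖⁻¹)) :=
              ENNReal.ofReal_le_ofReal (ptwise x y z hy (b y))
          _ = ENNReal.ofReal ((4*π)⁻¹) *
              (ENNReal.ofReal (‖y - z‖ * |b y|) * ENNReal.ofReal ‖x - y‖⁻¹) := by
              rw [ENNReal.ofReal_mul (by positivity), ENNReal.ofReal_mul (by positivity)]
    _ = ENNReal.ofReal ((4*π)⁻¹) *
          ∫⁻ y, ENNReal.ofReal (‖y - z‖ * |b y|) * ENNReal.ofReal ‖x - y‖⁻¹ :=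
        lintegral_const_mul' _ _ ENNReal.ofReal_ne_top

/-- there is an absolute constant `C` so that for every mean-zero
`b ∈ L¹(ℝ³)` with `‖|y−z| b(y)‖_{L¹} < ∞` and every `V` of global Kato norm `≤ K`,
`∫ |x−z| |[V(−Δ)^{−1}b](x)| dx ≤ C K ‖|y−z| b(y)‖_{L¹}`; i.e. `V(−Δ)^{−1}` preserves
the weighted space `|y−z|^{−1}L¹` on mean-zero functions. -/
theorem stmt17 :
    ∃ C : ℝ, 0 < C ∧
      ∀ (V b : E3 → ℝ) (K : ℝ) (z : E3), 0 ≤ K →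
        Integrable b →
        (∫ y, b y = 0) →
        Integrable (fun y => ‖y - z‖ * |b y|) →
        (∀ y : E3, ∫⁻ x, ENNReal.ofReal (|V x| / ‖x - y‖) ≤ ENNReal.ofReal K) →
        ∫⁻ x, ENNReal.ofReal (‖x - z‖ * |V x * invLap b x|) ≤
          ENNReal.ofReal (C * K * ∫ y, ‖y - z‖ * |b y|) := by
  refine ⟨1, one_pos, ?_⟩
  intro V b K z hK hb hb0 hbc hV
  set c : E3 → ℝ := fun y => ‖y - z‖ * |b y| with hc_def
  have hc0 : ∀ y, 0 ≤ c y := fun y => mul_nonneg (norm_nonneg _) (abs_nonneg _)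
  obtain ⟨c₀, hc₀m, hcc⟩ : ∃ c₀ : E3 → ℝ, Measurable c₀ ∧ c =ᵐ[volume] c₀ :=
    ⟨hbc.aemeasurable.mk c, hbc.aemeasurable.measurable_mk, hbc.aemeasurable.ae_eq_mk⟩
  set k : E3 → E3 → ℝ≥0∞ := fun x y => ENNReal.ofReal ‖x - y‖⁻¹ with hk_def
  set f : E3 → ℝ≥0∞ := fun x => ENNReal.ofReal |V x| with hf_def
  set J : E3 → ℝ≥0∞ := fun x => ∫⁻ y, ENNReal.ofReal (c₀ y) * k x y with hJ_def
  -- measurability of the product kernel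
  have hFm : Measurable (fun p : E3 × E3 => ENNReal.ofReal (c₀ p.2) * k p.1 p.2) :=
    ((hc₀m.comp measurable_snd).ennreal_ofReal).mul ker_meas
  have hJm : Measurable J := hFm.lintegral_prod_right'
  -- Kato hypothesis in product form
  have hV' : ∀ y, ∫⁻ x, f x * k x y ≤ ENNReal.ofReal K := by
    intro y
    have h := hV y
    have : ∀ x, ENNReal.ofReal (|V x| / ‖x - y‖) = f x * k x y := by
      intro x
      rw [div_eq_mul_inv, ENNReal.ofReal_mul (abs_nonneg _)]
    simpa [this] using h
  -- integral of c
  have hcI : ∫⁻ y, ENNReal.ofReal (c₀ y) = ENNReal.ofReal (∫ y, c y) := by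
    rw [ofReal_integral_eq_lintegral_ofReal hbc (Filter.Eventually.of_forall hc0)]
    exact (lintegral_congr_ae (hcc.mono fun y hy => by rw [hy])).symm
  have hcIfin : ∫⁻ y, ENNReal.ofReal (c₀ y) < ∞ := by
    rw [hcI]; exact ENNReal.ofReal_lt_top
  -- J is a.e. finite
  have hJfin : ∀ᵐ x, J x < ∞ := by
    have hfin : ∀ n : ℕ, ∫⁻ x in ball (0:E3) n, J x < ∞ := by
      intro n
      have hswap : ∫⁻ x in ball (0:E3) n, J x
          = ∫⁻ y, ∫⁻ x in ball (0:E3) n, ENNReal.ofReal (c₀ y) * k x y := by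
        exact lintegral_lintegral_swap hFm.aemeasurable
      rw [hswap]
      set Cn : ℝ≥0∞ := (∫⁻ u in ball (0:E3) 1, ENNReal.ofReal ‖u‖⁻¹) + volume (ball (0:E3) n)
        with hCn
      have hCnfin : Cn < ∞ :=
        ENNReal.add_lt_top.2 ⟨finite_ball, measure_ball_lt_top⟩
      calc ∫⁻ y, ∫⁻ x in ball (0:E3) n, ENNReal.ofReal (c₀ y) * k x y
          ≤ ∫⁻ y, ENNReal.ofReal (c₀ y) * Cn := by
            refine lintegral_mono fun y => ?_
            rw [lintegral_const_mul' _ _ ENNReal.ofReal_ne_top]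
            exact mul_le_mul_right (kernel_ball_bound y n) _
        _ = (∫⁻ y, ENNReal.ofReal (c₀ y)) * Cn :=
            lintegral_mul_const' _ _ hCnfin.ne
        _ < ∞ := ENNReal.mul_lt_top hcIfin hCnfin
    have hmeasset : MeasurableSet {x : E3 | ¬ J x < ∞} := by
      have : {x : E3 | ¬ J x < ∞} = J ⁻¹' {∞} := by
        ext x; simp [lt_top_iff_ne_top]
      rw [this]; exact hJm (measurableSet_singleton _)
    rw [ae_iff]
    have hsub : {x : E3 | ¬ J x < ∞} ⊆ ⋃ n : ℕ, {x : E3 | ¬ J x < ∞} ∩ ball 0 n := by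
      intro x hx
      obtain ⟨n, hn⟩ := exists_nat_gt ‖x‖
      exact Set.mem_iUnion.2 ⟨n, hx, by simpa [mem_ball_zero_iff] using hn⟩
    refine le_antisymm ((measure_mono hsub).trans ((measure_iUnion_le _).trans ?_)) (zero_le)
    have hzero : ∀ n : ℕ, volume ({x : E3 | ¬ J x < ∞} ∩ ball 0 n) = 0 := by
      intro n
      have h := ae_lt_top hJm (hfin n).ne
      rw [ae_iff] at h
      rw [Measure.restrict_apply hmeasset] at h
      exact h
    have hzero' : ∀ n : ℕ, volume ({x : E3 | J x = ⊤} ∩ ball 0 n) = 0 := by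
      intro n
      have h := hzero n
      rw [show {x : E3 | ¬ J x < ⊤} = {x : E3 | J x = ⊤} by
        ext x; simp [lt_top_iff_ne_top]] at h
      exact h
    simp [hzero']
  -- minorant trick
  obtain ⟨g, hgm, hgle, hgeq⟩ := exists_measurable_le_lintegral_eq
    (volume : Measure E3) (fun x => f x * J x)
  set W : E3 → ℝ≥0∞ := fun x => g x / J x with hW_def
  have hWm : Measurable W := hgm.div hJm
  have hWf : ∀ x, W x ≤ f x := by
    intro x
    rcases eq_or_ne (J x) 0 with h0 | h0
    · have hg0 : g x = 0 := le_antisymm (by simpa [h0] using hgle x) (zero_le)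
      simp [hW_def, hg0]
    rcases eq_or_ne (J x) ∞ with ht | ht
    · simp [hW_def, ht]
    · exact (ENNReal.div_le_iff_le_mul (Or.inl h0) (Or.inl ht)).2 (hgle x)
  have hgW : ∀ᵐ x, g x ≤ W x * J x := by
    filter_upwards [hJfin] with x hx
    rcases eq_or_ne (J x) 0 with h0 | h0
    · have hg0 : g x = 0 := le_antisymm (by simpa [h0] using hgle x) (zero_le)
      simp [hg0]
    · rw [hW_def]
      rw [ENNReal.div_mul_cancel h0 hx.ne]
  -- main estimate
  have hmain : ∫⁻ x, f x * J x ≤ ENNReal.ofReal K * ∫⁻ y, ENNReal.ofReal (c₀ y) := by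
    have hWprod : Measurable (fun p : E3 × E3 => W p.1 * (ENNReal.ofReal (c₀ p.2) * k p.1 p.2)) :=
      (hWm.comp measurable_fst).mul hFm
    calc ∫⁻ x, f x * J x = ∫⁻ x, g x := hgeq
      _ ≤ ∫⁻ x, W x * J x := lintegral_mono_ae hgW
      _ = ∫⁻ x, ∫⁻ y, W x * (ENNReal.ofReal (c₀ y) * k x y) := by
          refine lintegral_congr fun x => ?_
          exact (lintegral_const_mul (W x) ((hc₀m.ennreal_ofReal).mul (by fun_prop))).symm
      _ = ∫⁻ y, ∫⁻ x, W x * (ENNReal.ofReal (c₀ y) * k x y) :=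
          lintegral_lintegral_swap hWprod.aemeasurable
      _ ≤ ∫⁻ y, ENNReal.ofReal (c₀ y) * ENNReal.ofReal K := by
          refine lintegral_mono fun y => ?_
          have hrw : ∀ x, W x * (ENNReal.ofReal (c₀ y) * k x y)
              = ENNReal.ofReal (c₀ y) * (W x * k x y) := fun x => by ring
          simp_rw [hrw]
          rw [lintegral_const_mul (ENNReal.ofReal (c₀ y)) (f := fun x => W x * k x y) (hWm.mul (by fun_prop))]
          refine mul_le_mul_right ?_ _
          refine le_trans (lintegral_mono fun x => mul_le_mul_left (hWf x) _) (hV' y)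
      _ = ENNReal.ofReal K * ∫⁻ y, ENNReal.ofReal (c₀ y) := by
          rw [lintegral_mul_const _ hc₀m.ennreal_ofReal, mul_comm]
  -- combine
  have hstep1 : ∫⁻ x, ENNReal.ofReal (‖x - z‖ * |V x * invLap b x|)
      ≤ ENNReal.ofReal ((4*π)⁻¹) * ∫⁻ x, f x * J x := by
    rw [← lintegral_const_mul' _ _ ENNReal.ofReal_ne_top]
    refine lintegral_mono fun x => ?_
    have hJx : J x = ∫⁻ y, ENNReal.ofReal (c y) * k x y :=
      (lintegral_congr_ae (hcc.mono fun y hy => by rw [hy])).symm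
    have habs : ‖x - z‖ * |V x * invLap b x| = |V x| * (‖x - z‖ * |invLap b x|) := by
      rw [abs_mul]; ring
    calc ENNReal.ofReal (‖x - z‖ * |V x * invLap b x|)
        = f x * ENNReal.ofReal (‖x - z‖ * |invLap b x|) := by
          rw [habs, ENNReal.ofReal_mul (abs_nonneg _)]
      _ ≤ f x * (ENNReal.ofReal ((4*π)⁻¹) * J x) := by
          refine mul_le_mul_right ?_ _
          rw [hJx]
          exact key_bound b hb hb0 z x
      _ = ENNReal.ofReal ((4*π)⁻¹) * (f x * J x) := by ring
  calc ∫⁻ x, ENNReal.ofReal (‖x - z‖ * |V x * invLap b x|)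
      ≤ ENNReal.ofReal ((4*π)⁻¹) * (ENNReal.ofReal K * ENNReal.ofReal (∫ y, c y)) := by
        refine hstep1.trans ?_
        rw [← hcI]
        exact mul_le_mul_right hmain _
    _ ≤ ENNReal.ofReal (1 * K * ∫ y, c y) := by
        rw [← ENNReal.ofReal_mul hK, ← ENNReal.ofReal_mul (by positivity)]
        refine ENNReal.ofReal_le_ofReal ?_
        have hI0 : 0 ≤ ∫ y, c y := integral_nonneg hc0
        have h4 : (4*π)⁻¹ ≤ 1 := by
          rw [inv_le_one_iff₀]
          right
          nlinarith [Real.pi_gt_three]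
        calc (4*π)⁻¹ * (K * ∫ y, c y) ≤ 1 * (K * ∫ y, c y) := by
              exact mul_le_mul_of_nonneg_right h4 (by positivity)
          _ = 1 * K * ∫ y, c y := by ring
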